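/- The functions B_1(x) = Im(x_1·conj(x_3)), B_2(x) = Im(x_2·conj(x_4)) and B_3(x) = x_1·conj(x_4) − conj(x_2)·x_3 on the period domain P satisfy: (i) B_i(Ax) = B_i(x) for every A ∈ SL(2,ℤ) and x ∈ P (i = 1,2,3); (ii) B_1(z̃) = Im z, B_2(z̃) = 0, B_3(z̃) = 1 for every z ∈ ℍ; (iii) for every x ∈ P and g = [[k_1,k_3],[0,k_2]] ∈ G_0: B_1(x·g) = B_1(x)·|k_1|², B_2(x·g) = B_1(x)·|k_3|² + B_2(x)·|k_2|² + Im(B_3(x)·k_3·conj(k_2)), and B_3(x·g) = B_3(x)·k_1·conj(k_2) + 2√(−1)·k_1·conj(k_3)·B_1(x). -/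

import Mathlib

open Complex

/-- `B₁(x) = Im(x₁ x̄₃)` on the period domain. -/
noncomputable def B₁ (x : Matrix (Fin 2) (Fin 2) ℂ) : ℝ :=
  (x 0 0 * (starRingEnd ℂ) (x 1 0)).im

/-- `B₂(x) = Im(x₂ x̄₄)` on the period domain. -/
noncomputable def B₂ (x : Matrix (Fin 2) (Fin 2) ℂ) : ℝ :=
  (x 0 1 * (starRingEnd ℂ) (x 1 1)).im

/-- `B₃(x) = x₁ x̄₄ − x̄₂ x₃` on the period domain. -/
noncomputable def B₃ (x : Matrix (Fin 2) (Fin 2) ℂ) : ℂ :=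
  x 0 0 * (starRingEnd ℂ) (x 1 1) - (starRingEnd ℂ) (x 0 1) * x 1 0

/-- the functions `B₁, B₂, B₃` on the period domain are `SL(2,ℤ)`-invariant,
restrict to `Im z, 0, 1` on the embedded upper half plane, and transform under the right
action of the Borel group `G₀` by the stated rules. -/
theorem B_properties :
    (∀ A : Matrix (Fin 2) (Fin 2) ℤ, A.det = 1 →
      ∀ x : Matrix (Fin 2) (Fin 2) ℂ, x.det ≠ 0 →
        0 < (x 0 0 * (starRingEnd ℂ) (x 1 0)).im →
        B₁ (A.map (Int.cast : ℤ → ℂ) * x) = B₁ x ∧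
        B₂ (A.map (Int.cast : ℤ → ℂ) * x) = B₂ x ∧
        B₃ (A.map (Int.cast : ℤ → ℂ) * x) = B₃ x) ∧
    (∀ z : ℂ, 0 < z.im →
      B₁ !![z, -1; 1, 0] = z.im ∧ B₂ !![z, -1; 1, 0] = 0 ∧ B₃ !![z, -1; 1, 0] = 1) ∧
    (∀ x : Matrix (Fin 2) (Fin 2) ℂ, x.det ≠ 0 →
      0 < (x 0 0 * (starRingEnd ℂ) (x 1 0)).im →
      ∀ k₁ k₂ k₃ : ℂ, k₁ ≠ 0 → k₂ ≠ 0 →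
        B₁ (x * !![k₁, k₃; 0, k₂]) = B₁ x * ‖k₁‖ ^ 2 ∧
        B₂ (x * !![k₁, k₃; 0, k₂]) =
          B₁ x * ‖k₃‖ ^ 2 + B₂ x * ‖k₂‖ ^ 2 +
            (B₃ x * k₃ * (starRingEnd ℂ) k₂).im ∧
        B₃ (x * !![k₁, k₃; 0, k₂]) =
          B₃ x * k₁ * (starRingEnd ℂ) k₂ +
            2 * Complex.I * k₁ * (starRingEnd ℂ) k₃ * (B₁ x : ℂ)) := by

  refine ⟨?_, ?_, ?_⟩
  · intro A hA x _ _
    rw [Matrix.det_fin_two] at hA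
    have hd : ((A 0 0 : ℝ)) * (A 1 1) - (A 0 1) * (A 1 0) = 1 := by exact_mod_cast hA
    refine ⟨?_, ?_, ?_⟩
    · simp only [B₁, Matrix.mul_apply, Fin.sum_univ_two, Matrix.map_apply, map_add, map_mul,
        map_intCast, Complex.add_im, Complex.mul_im, Complex.intCast_im,
        Complex.intCast_re, Complex.add_re, Complex.mul_re, Complex.conj_re, Complex.conj_im]
      linear_combination ((x 1 0).re * (x 0 0).im - (x 0 0).re * (x 1 0).im) * hd
    · simp only [B₂, Matrix.mul_apply, Fin.sum_univ_two, Matrix.map_apply, map_add, map_mul,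
        map_intCast, Complex.add_im, Complex.mul_im, Complex.intCast_im,
        Complex.intCast_re, Complex.add_re, Complex.mul_re, Complex.conj_re, Complex.conj_im]
      linear_combination ((x 1 1).re * (x 0 1).im - (x 0 1).re * (x 1 1).im) * hd
    · simp only [B₃, Matrix.mul_apply, Fin.sum_univ_two, Matrix.map_apply, map_add, map_mul,
        map_intCast, Complex.ext_iff, Complex.add_im, Complex.mul_im, Complex.intCast_im,
        Complex.intCast_re, Complex.add_re, Complex.mul_re, Complex.sub_re, Complex.sub_im,
        Complex.conj_re, Complex.conj_im]
      constructor
      · linear_combination ((x 0 0).re * (x 1 1).re + (x 0 0).im * (x 1 1).im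
          - (x 0 1).re * (x 1 0).re - (x 0 1).im * (x 1 0).im) * hd
      · linear_combination ((x 1 1).re * (x 0 0).im - (x 0 0).re * (x 1 1).im
          + (x 0 1).im * (x 1 0).re - (x 0 1).re * (x 1 0).im) * hd
  · intro z _
    refine ⟨?_, ?_, ?_⟩ <;>
      simp [B₁, B₂, B₃]
  · intro x _ _ k₁ k₂ k₃ _ _
    refine ⟨?_, ?_, ?_⟩ <;>
      simp only [B₁, B₂, B₃, Matrix.mul_apply, Fin.sum_univ_two, Matrix.of_apply, Matrix.cons_val', Matrix.cons_val_zero,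
        Matrix.cons_val_one, Matrix.head_cons, Matrix.empty_val', Matrix.cons_val_fin_one,
        Matrix.head_fin_const, map_add, map_mul, Complex.ext_iff, Complex.add_im, Complex.mul_im,
        Complex.add_re, Complex.mul_re, Complex.sub_re, Complex.sub_im, Complex.conj_re,
        Complex.conj_im, Complex.ofReal_re, Complex.ofReal_im, Complex.I_re, Complex.I_im,
        Complex.sq_norm, Complex.normSq_apply, Complex.re_ofNat, Complex.im_ofNat, Complex.zero_re, Complex.zero_im] <;>
      (ring_nf; try exact ⟨trivial, trivial⟩)
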